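/- Let G = (V,E) be a directed graph, W ⊆ V, and let S ⊆ V be a strongly connected component such that the induced subgraph G[S] is a clique of size |S| ≥ 2. Write ℓ = |W ∩ S| and assume 1 ≤ ℓ < |S|. Then in the graph G − E⁺(W), every node i ∈ W ∩ S satisfies PR¹(i) = |S|/ℓ, where PR¹ denotes PageRank with α = 1 (well-defined here since all walks ending at i stay within the acyclic part S \ W followed by i). -/

import Mathlib

open scoped Classical

/-- A walk in a directed graph given by edge relation `E`. -/
def IsWalk {V : Type*} (E : V → V → Prop) (l : List V) : Prop :=
  l ≠ [] ∧ l.Chain' E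

/-- Out-degree of a node. -/
noncomputable def outDeg {V : Type*} (E : V → V → Prop) (u : V) : ℕ :=
  Nat.card {w | E u w}

/-- PageRank of `v` with decay `α`, as a sum over walks ending at `v`. -/
noncomputable def prSum {V : Type*} (E : V → V → Prop) (α : ℝ) (v : V) : ℝ :=
  ∑' l : {l : List V // IsWalk E l ∧ l.getLast? = some v},
    α ^ (l.val.length - 1) / (l.val.dropLast.map fun u => (outDeg E u : ℝ)).prod

/-- Pull a predicate on a sigma type out to a sigma of subtypes. -/
def sigmaSubtypeEquiv {α : Type*} {β : α → Type*} (D : ∀ a, β a → Prop) :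
    {x : Σ a, β a // D x.1 x.2} ≃ Σ a, {b : β a // D a b} where
  toFun x := ⟨x.1.1, x.1.2, x.2⟩
  invFun y := ⟨⟨y.1, y.2.1⟩, y.2.2⟩
  left_inv := fun ⟨⟨_, _⟩, _⟩ => rfl
  right_inv := fun ⟨_, _, _⟩ => rfl

/-- Peeling off the first element of a tuple whose associated list is a chain. -/
def chainConsEquiv {V : Type*} [Inhabited V] (R : V → V → Prop) (i : V) (n : ℕ) :
    {f : Fin (n + 1) → V // List.Chain' R (List.ofFn f ++ [i])} ≃
      Σ q : {f : Fin n → V // List.Chain' R (List.ofFn f ++ [i])},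
        {a : V // R a ((List.ofFn q.1 ++ [i]).headI)} := by
  have hiff : ∀ f : Fin (n + 1) → V,
      List.Chain' R (List.ofFn f ++ [i]) ↔
        List.Chain' R (List.ofFn (Fin.tail f) ++ [i]) ∧
          R (f 0) ((List.ofFn (Fin.tail f) ++ [i]).headI) := by
    intro f
    rw [List.ofFn_succ, List.cons_append, List.Chain', List.isChain_cons]
    have : ∀ (l : List V), l ≠ [] → ((∀ y ∈ l.head?, R (f 0) y) ↔ R (f 0) l.headI) := by
      intro l hl
      cases l with
      | nil => simp at hl
      | cons x t => simp
    rw [this _ (by simp)]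
    exact ⟨fun h => ⟨h.2, h.1⟩, fun h => ⟨h.2, h.1⟩⟩
  let F : (Σ q : {f : Fin n → V // List.Chain' R (List.ofFn f ++ [i])},
      {a : V // R a ((List.ofFn q.1 ++ [i]).headI)}) →
      {f : Fin (n + 1) → V // List.Chain' R (List.ofFn f ++ [i])} :=
    fun x => ⟨Fin.cons x.2.1 x.1.1, (hiff _).mpr (by
      have ht : Fin.tail (Fin.cons x.2.1 x.1.1 : Fin (n + 1) → V) = x.1.1 :=
        funext fun j => by simp [Fin.tail]
      have hz : (Fin.cons x.2.1 x.1.1 : Fin (n + 1) → V) 0 = x.2.1 := by simp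
      rw [ht, hz]; exact ⟨x.1.2, x.2.2⟩)⟩
  let Gn : {f : Fin (n + 1) → V // List.Chain' R (List.ofFn f ++ [i])} →
      Σ q : {f : Fin n → V // List.Chain' R (List.ofFn f ++ [i])},
        {a : V // R a ((List.ofFn q.1 ++ [i]).headI)} :=
    fun f => ⟨⟨Fin.tail f.1, ((hiff f.1).mp f.2).1⟩, ⟨f.1 0, ((hiff f.1).mp f.2).2⟩⟩
  have hleft : ∀ f, F (Gn f) = f := fun f => Subtype.ext (Fin.cons_self_tail f.1)
  have hinj : Function.Injective F := by
    rintro ⟨⟨g1, hg1⟩, a1, ha1⟩ ⟨⟨g2, hg2⟩, a2, ha2⟩ h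
    have h' : (Fin.cons a1 g1 : Fin (n + 1) → V) = Fin.cons a2 g2 :=
      congrArg Subtype.val h
    have hgg : g1 = g2 := funext fun j => by
      have := congrFun h' j.succ
      simpa using this
    subst hgg
    have haa : a1 = a2 := by
      have := congrFun h' 0
      simpa using this
    subst haa
    rfl
  exact
    { toFun := Gn
      invFun := F
      left_inv := hleft
      right_inv := fun x => hinj (hleft (F x)) }

theorem stmt10 {V : Type*} [Fintype V] [DecidableEq V] (E : V → V → Prop)
    (S W : Finset V)
    (hirr : ∀ v, ¬ E v v)
    (hclique : ∀ u ∈ S, ∀ v ∈ S, u ≠ v → E u v)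
    (hcomp : ∀ u v, E u v → (u ∈ S ↔ v ∈ S))
    (hS2 : 2 ≤ S.card)
    (hl1 : 1 ≤ (W ∩ S).card) (hl2 : (W ∩ S).card < S.card) :
    ∀ i ∈ W ∩ S,
      prSum (fun u v => E u v ∧ u ∉ W) 1 i = (S.card : ℝ) / ((W ∩ S).card : ℝ) := by
  intro i hi
  obtain ⟨hiW, hiS⟩ := Finset.mem_inter.mp hi
  haveI : Inhabited V := ⟨i⟩
  set E' : V → V → Prop := fun u v => E u v ∧ u ∉ W with hE'
  set m : ℕ := (S \ W).card with hmdef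
  have hsw : S \ W = S \ (W ∩ S) := by
    ext x; simp only [Finset.mem_sdiff, Finset.mem_inter]; tauto
  have hm : m = S.card - (W ∩ S).card := by
    rw [hmdef, hsw, Finset.card_sdiff_of_subset Finset.inter_subset_right]
  have hm1 : 1 ≤ m := by omega
  have hmlt : m < S.card := by omega
  -- every element of a chain-prefix lies in S \ W
  have key : ∀ p : List V, List.Chain' E' (p ++ [i]) → ∀ u ∈ p, u ∈ S \ W := by
    intro p
    induction p with
    | nil => intro _ u hu; simp at hu
    | cons a q ih =>
      intro hc u hu
      rw [List.cons_append, List.Chain', List.isChain_cons] at hc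
      obtain ⟨hhead, htail⟩ := hc
      have ha : a ∈ S \ W := by
        cases q with
        | nil =>
          have h1 : E' a i := hhead i rfl
          exact Finset.mem_sdiff.mpr ⟨(hcomp a i h1.1).mpr hiS, h1.2⟩
        | cons b r =>
          have h1 : E' a b := hhead b rfl
          have hb : b ∈ S \ W := ih htail b (List.mem_cons_self)
          exact Finset.mem_sdiff.mpr ⟨(hcomp a b h1.1).mpr (Finset.mem_sdiff.mp hb).1, h1.2⟩
      rcases List.mem_cons.mp hu with h | h
      · exact h ▸ ha
      · exact ih htail u h
  -- out-degrees in S \ W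
  have hout : ∀ u ∈ S \ W, outDeg E' u = S.card - 1 := by
    intro u hu
    obtain ⟨huS, huW⟩ := Finset.mem_sdiff.mp hu
    have hset : {w | E' u w} = ↑(S.erase u) := by
      ext w
      simp only [Set.mem_setOf_eq, Finset.coe_erase, Set.mem_diff, Finset.mem_coe,
        Set.mem_singleton_iff]
      constructor
      · rintro ⟨h1, -⟩
        exact ⟨(hcomp u w h1).mp huS, fun hwu => hirr u (hwu ▸ h1)⟩
      · rintro ⟨hwS, hwu⟩
        exact ⟨hclique u huS w hwS (fun h => hwu h.symm), huW⟩
    rw [outDeg, hset, Nat.card_coe_set_eq, Set.ncard_coe_finset,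
      Finset.card_erase_of_mem huS]
  -- product of out-degrees along a prefix
  have hprod : ∀ p : List V, (∀ u ∈ p, u ∈ S \ W) →
      (p.map fun u => (outDeg E' u : ℝ)).prod = ((S.card : ℝ) - 1) ^ p.length := by
    intro p hp
    rw [← List.length_map (as := p) (fun u => (outDeg E' u : ℝ))]
    apply List.prod_eq_pow_card
    intro x hx
    obtain ⟨u, hu, rfl⟩ := List.mem_map.mp hx
    rw [hout u (hp u hu), Nat.cast_sub (by omega), Nat.cast_one]
  -- reconstruction of walks ending at i
  have hrecon : ∀ (l : List V), l ≠ [] → l.getLast? = some i → l.dropLast ++ [i] = l := by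
    intro l hne hl
    have h2 : l.getLast hne = i := by
      rw [List.getLast?_eq_getLast hne] at hl
      exact Option.some.inj hl
    rw [← h2]
    exact List.dropLast_append_getLast hne
  -- the equivalence with prefixes
  let e1 : {l : List V // IsWalk E' l ∧ l.getLast? = some i} ≃
      {p : List V // List.Chain' E' (p ++ [i])} :=
    { toFun := fun l => ⟨l.1.dropLast, by
        rw [hrecon l.1 l.2.1.1 l.2.2]; exact l.2.1.2⟩
      invFun := fun p => ⟨p.1 ++ [i], ⟨⟨by simp, p.2⟩, by simp⟩⟩
      left_inv := fun l => Subtype.ext (hrecon l.1 l.2.1.1 l.2.2)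
      right_inv := fun p => Subtype.ext List.dropLast_concat }
  let e2 : {p : List V // List.Chain' E' (p ++ [i])} ≃
      Σ n, {f : Fin n → V // List.Chain' E' (List.ofFn f ++ [i])} :=
    ((List.equivSigmaTuple (α := V)).subtypeEquiv (fun l => by
      simp only [List.equivSigmaTuple, Equiv.coe_fn_mk, List.ofFn_get])).trans
      (sigmaSubtypeEquiv fun n (f : Fin n → V) => List.Chain' E' (List.ofFn f ++ [i]))
  let e := e1.trans e2
  set r : ℝ := ((S.card : ℝ) - 1)⁻¹ with hrdef
  have hscast : (1 : ℝ) < (S.card : ℝ) := by exact_mod_cast (by omega : 1 < S.card)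
  have hrpos : 0 < r := inv_pos.mpr (by linarith)
  -- the summand of a walk equals r ^ (first component of e)
  have hsummand : ∀ l : {l : List V // IsWalk E' l ∧ l.getLast? = some i},
      (1 : ℝ) ^ (l.val.length - 1) / (l.val.dropLast.map fun u => (outDeg E' u : ℝ)).prod
        = r ^ (e l).1 := by
    intro l
    have hfst : (e l).1 = l.1.dropLast.length := rfl
    have hchain : List.Chain' E' (l.1.dropLast ++ [i]) := (e1 l).2
    rw [one_pow, hprod _ (key _ hchain), hfst, one_div, ← inv_pow]
  -- the fiber cardinalities
  have hcard0 : Nat.card {f : Fin 0 → V // List.Chain' E' (List.ofFn f ++ [i])} = 1 := by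
    have : Unique {f : Fin 0 → V // List.Chain' E' (List.ofFn f ++ [i])} :=
      { default := ⟨fun x => x.elim0, by simp [List.Chain']⟩
        uniq := fun a => Subtype.ext (funext fun x => x.elim0) }
    exact Nat.card_unique
  have hfiber : ∀ (h : V), h ∈ S →
      Nat.card {a : V // E' a h} = ((S \ W).erase h).card := by
    intro h hh
    have hset : {a : V | E' a h} = ↑((S \ W).erase h) := by
      ext a
      simp only [Set.mem_setOf_eq, Finset.coe_erase, Set.mem_diff, Finset.mem_coe,
        Finset.mem_sdiff, Set.mem_singleton_iff]
      constructor
      · rintro ⟨h1, h2⟩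
        exact ⟨⟨(hcomp a h h1).mpr hh, h2⟩, fun hah => hirr h (hah ▸ h1)⟩
      · rintro ⟨⟨haS, haW⟩, hah⟩
        exact ⟨hclique a haS h hh hah, haW⟩
    calc Nat.card {a : V // E' a h} = Nat.card {a : V | E' a h} := rfl
      _ = ((S \ W).erase h).card := by
          rw [hset, Nat.card_coe_set_eq, Set.ncard_coe_finset]
  -- recursion for cardinalities
  have hcardsucc : ∀ n : ℕ,
      Nat.card {f : Fin (n + 1) → V // List.Chain' E' (List.ofFn f ++ [i])} =
        ∑ q : {f : Fin n → V // List.Chain' E' (List.ofFn f ++ [i])},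
          ((S \ W).erase ((List.ofFn q.1 ++ [i]).headI)).card := by
    intro n
    rw [Nat.card_congr (chainConsEquiv E' i n), Nat.card_eq_fintype_card,
      Fintype.card_sigma]
    apply Finset.sum_congr rfl
    intro q _
    rw [← Nat.card_eq_fintype_card]
    apply hfiber
    -- the head of the list is in S
    cases n with
    | zero =>
      have : List.ofFn q.1 = [] := by
        simp [List.ofFn]
      rw [this]
      exact hiS
    | succ k =>
      have hmem : (List.ofFn q.1 ++ [i]).headI = q.1 0 := by
        rw [List.ofFn_succ]; rfl
      rw [hmem]
      have := key (List.ofFn q.1) q.2 (q.1 0) (by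
        rw [List.ofFn_succ]; exact List.mem_cons_self)
      exact (Finset.mem_sdiff.mp this).1
  have hcard1 : Nat.card {f : Fin 1 → V // List.Chain' E' (List.ofFn f ++ [i])} = m := by
    rw [hcardsucc 0]
    have : ∀ q : {f : Fin 0 → V // List.Chain' E' (List.ofFn f ++ [i])},
        ((S \ W).erase ((List.ofFn q.1 ++ [i]).headI)).card = m := by
      intro q
      have h0 : List.ofFn q.1 = [] := by simp [List.ofFn]
      rw [h0]
      rw [(rfl : ([] ++ [i] : List V).headI = i), Finset.erase_eq_of_notMem (by simp [hiW])]
    rw [Finset.sum_congr rfl (fun q _ => this q), Finset.sum_const, smul_eq_mul,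
      Finset.card_univ, ← Nat.card_eq_fintype_card, hcard0, one_mul]
  have hcardstep : ∀ k : ℕ,
      Nat.card {f : Fin (k + 2) → V // List.Chain' E' (List.ofFn f ++ [i])} =
        (m - 1) * Nat.card {f : Fin (k + 1) → V // List.Chain' E' (List.ofFn f ++ [i])} := by
    intro k
    rw [hcardsucc (k + 1)]
    have : ∀ q : {f : Fin (k + 1) → V // List.Chain' E' (List.ofFn f ++ [i])},
        ((S \ W).erase ((List.ofFn q.1 ++ [i]).headI)).card = m - 1 := by
      intro q
      have hmem : (List.ofFn q.1 ++ [i]).headI = q.1 0 := by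
        rw [List.ofFn_succ]; rfl
      have hq0 : q.1 0 ∈ S \ W := key (List.ofFn q.1) q.2 (q.1 0) (by
        rw [List.ofFn_succ]; exact List.mem_cons_self)
      rw [hmem, Finset.card_erase_of_mem hq0]
    rw [Finset.sum_congr rfl (fun q _ => this q), Finset.sum_const, smul_eq_mul,
      Finset.card_univ, ← Nat.card_eq_fintype_card, Nat.mul_comm]
  have hcardformula : ∀ k : ℕ,
      Nat.card {f : Fin (k + 1) → V // List.Chain' E' (List.ofFn f ++ [i])} =
        m * (m - 1) ^ k := by
    intro k
    induction k with
    | zero => simpa using hcard1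
    | succ j ih =>
      rw [hcardstep j, ih]
      ring
  -- geometric-series facts
  set x : ℝ := ((m - 1 : ℕ) : ℝ) * r with hxdef
  have hx0 : 0 ≤ x := mul_nonneg (Nat.cast_nonneg _) hrpos.le
  have hx1 : x < 1 := by
    have h1 : ((m - 1 : ℕ) : ℝ) < (S.card : ℝ) - 1 := by
      have : (m - 1) < S.card - 1 := by omega
      have h2 : ((m - 1 : ℕ) : ℝ) < ((S.card - 1 : ℕ) : ℝ) := by exact_mod_cast this
      rwa [Nat.cast_sub (show 1 ≤ S.card by omega), Nat.cast_one] at h2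
    rw [hxdef, ← div_eq_mul_inv, div_lt_one (by linarith)]
    exact h1
  have hgshift : (fun n : ℕ => (Nat.card {f : Fin (n + 1) → V //
        List.Chain' E' (List.ofFn f ++ [i])} : ℝ) * r ^ (n + 1)) =
      fun n : ℕ => ((m : ℝ) * r) * x ^ n := by
    funext n
    rw [hcardformula n]
    push_cast
    rw [hxdef]
    ring
  have hg : Summable (fun n : ℕ =>
      (Nat.card {f : Fin n → V // List.Chain' E' (List.ofFn f ++ [i])} : ℝ) * r ^ n) := by
    have h2 : Summable (fun n : ℕ => ((m : ℝ) * r) * x ^ n) :=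
      (summable_geometric_of_lt_one hx0 hx1).mul_left _
    rw [← hgshift] at h2
    exact (summable_nat_add_iff 1).mp h2
  -- the sigma summand
  set G : (Σ n, {f : Fin n → V // List.Chain' E' (List.ofFn f ++ [i])}) → ℝ :=
    fun x => r ^ x.1 with hGdef
  have hGfib : ∀ n, ∑' f : {f : Fin n → V // List.Chain' E' (List.ofFn f ++ [i])},
      G ⟨n, f⟩ = (Nat.card {f : Fin n → V // List.Chain' E' (List.ofFn f ++ [i])} : ℝ)
        * r ^ n := by
    intro n
    rw [tsum_fintype]
    simp [hGdef, Finset.sum_const, Nat.card_eq_fintype_card, nsmul_eq_mul]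
  have hGfibsummable : ∀ n, Summable (fun f : {f : Fin n → V //
      List.Chain' E' (List.ofFn f ++ [i])} => G ⟨n, f⟩) :=
    fun n => (hasSum_fintype _).summable
  have hGsummable : Summable G := by
    rw [summable_sigma_of_nonneg (fun y => by positivity)]
    refine ⟨hGfibsummable, ?_⟩
    simpa only [hGfib] using hg
  -- putting it together
  rw [prSum]
  have : ∀ l : {l : List V // IsWalk E' l ∧ l.getLast? = some i},
      (1 : ℝ) ^ (l.val.length - 1) / (l.val.dropLast.map fun u => (outDeg E' u : ℝ)).prod
        = G (e l) := hsummand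
  rw [tsum_congr this, e.tsum_eq G, Summable.tsum_sigma' hGfibsummable hGsummable]
  have : ∀ n : ℕ, ∑' f : {f : Fin n → V // List.Chain' E' (List.ofFn f ++ [i])},
      G ⟨n, f⟩ = (Nat.card {f : Fin n → V // List.Chain' E' (List.ofFn f ++ [i])} : ℝ)
        * r ^ n := hGfib
  rw [tsum_congr this, Summable.tsum_eq_zero_add hg, hcard0]
  simp only [hgshift]
  rw [tsum_mul_left, tsum_geometric_of_lt_one hx0 hx1]
  -- final arithmetic
  have hb1 : (1 : ℝ) ≤ ((W ∩ S).card : ℝ) := by exact_mod_cast hl1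
  have hmcast : (m : ℝ) = (S.card : ℝ) - ((W ∩ S).card : ℝ) := by
    rw [hm, Nat.cast_sub (by omega)]
  have hm1cast : ((m - 1 : ℕ) : ℝ) = (m : ℝ) - 1 := by
    rw [Nat.cast_sub (by omega), Nat.cast_one]
  rw [hxdef, hrdef, hm1cast, hmcast]
  have hb0 : ((W ∩ S).card : ℝ) ≠ 0 := by linarith
  have hs1 : (S.card : ℝ) - 1 ≠ 0 := by linarith
  have hkey : 1 - ((S.card : ℝ) - ((W ∩ S).card : ℝ) - 1) * ((S.card : ℝ) - 1)⁻¹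
      = ((W ∩ S).card : ℝ) * ((S.card : ℝ) - 1)⁻¹ := by
    field_simp
    ring
  rw [hkey]
  field_simp
  push_cast
  ring
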